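/- Let λ, μ, ν be integer partitions such that (λ, μ, ν) is (⊟,⊞)-storable. Define θ by θ_1 = ν_1 + max(λ_1, ν_2) − μ_1 and θ_i = min(λ_{i−1}, ν_i) + max(λ_i, ν_{i+1}) − μ_i for i ≥ 2. Then θ is an integer partition and (λ, θ, ν) is (⊟,⊞)-storable. -/
import Mathlib


/-- An integer partition, modeled as a function `l : ℕ → ℕ` where `l i` is the part
`λ_{i+1}` (0-indexed): weakly decreasing with only finitely many nonzero entries. -/
def IsPartition (l : ℕ → ℕ) : Prop :=
  (∀ i, l (i + 1) ≤ l i) ∧ ∃ N, ∀ i, N ≤ i → l i = 0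

/-- `(l, m)` is a storable pair: `λ_i ≥ μ_i ≥ λ_{i+1}` for all `i ≥ 1` (0-indexed). -/
def StorablePair (l m : ℕ → ℕ) : Prop :=
  ∀ i, m i ≤ l i ∧ l (i + 1) ≤ m i

/-- `(λ, μ, ν)` is `(⊞,⊞)`-storable: `(λ, μ)` and `(ν, μ)` are storable pairs. -/
def StorablePP (l m n : ℕ → ℕ) : Prop := StorablePair l m ∧ StorablePair n m

/-- `(λ, μ, ν)` is `(⊞,⊟)`-storable: `(λ, μ)` and `(μ, ν)` are storable pairs. -/
def StorablePM (l m n : ℕ → ℕ) : Prop := StorablePair l m ∧ StorablePair m n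

/-- `(λ, μ, ν)` is `(⊟,⊞)`-storable: `(μ, λ)` and `(ν, μ)` are storable pairs. -/
def StorableMP (l m n : ℕ → ℕ) : Prop := StorablePair m l ∧ StorablePair n m

/-- `(λ, μ, ν)` is `(⊟,⊟)`-storable: `(μ, λ)` and `(μ, ν)` are storable pairs. -/
def StorableMM (l m n : ℕ → ℕ) : Prop := StorablePair m l ∧ StorablePair m n

/-- `(λ, μ, ν)` is strongly `(⊟,⊟)`-storable: `(⊟,⊟)`-storable with `λ_1 = μ_1` or `μ_1 = ν_1`. -/
def StronglyStorableMM (l m n : ℕ → ℕ) : Prop :=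
  StorableMM l m n ∧ (l 0 = m 0 ∨ m 0 = n 0)

/-- Diagonal transformation for a `(⊞,⊞)`-storable triplet:
`θ_1 = max(λ_1, ν_1)`, `θ_i = min(λ_{i−1}, ν_{i−1}) + max(λ_i, ν_i) − μ_{i−1}` for `i ≥ 2`. -/
def diagPP (l m n : ℕ → ℕ) : ℕ → ℕ
  | 0 => max (l 0) (n 0)
  | j + 1 => min (l j) (n j) + max (l (j + 1)) (n (j + 1)) - m j

/-- Diagonal transformation for a `(⊞,⊟)`-storable triplet:
`θ_1 = λ_1 + max(λ_2, ν_1) − μ_1`, `θ_i = min(λ_i, ν_{i−1}) + max(λ_{i+1}, ν_i) − μ_i` for `i ≥ 2`. -/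
def diagPM (l m n : ℕ → ℕ) : ℕ → ℕ
  | 0 => l 0 + max (l 1) (n 0) - m 0
  | j + 1 => min (l (j + 1)) (n j) + max (l (j + 2)) (n (j + 1)) - m (j + 1)

/-- Diagonal transformation for a `(⊟,⊞)`-storable triplet:
`θ_1 = ν_1 + max(λ_1, ν_2) − μ_1`, `θ_i = min(λ_{i−1}, ν_i) + max(λ_i, ν_{i+1}) − μ_i` for `i ≥ 2`. -/
def diagMP (l m n : ℕ → ℕ) : ℕ → ℕ
  | 0 => n 0 + max (l 0) (n 1) - m 0
  | j + 1 => min (l j) (n (j + 1)) + max (l (j + 1)) (n (j + 2)) - m (j + 1)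

/-- Diagonal transformation for a `(⊟,⊟)`-storable triplet:
`θ_i = min(λ_i, ν_i) + max(λ_{i+1}, ν_{i+1}) − μ_{i+1}` for all `i ≥ 1`. -/
def diagMM (l m n : ℕ → ℕ) (j : ℕ) : ℕ :=
  min (l j) (n j) + max (l (j + 1)) (n (j + 1)) - m (j + 1)

/-- If `(λ, μ, ν)` is `(⊟,⊞)`-storable, then `θ = diag(λ, μ, ν)` is an integer partition
and `(λ, θ, ν)` is `(⊟,⊞)`-storable. -/
theorem diagMP_storable (l m n : ℕ → ℕ)
    (hl : IsPartition l) (hm : IsPartition m) (hn : IsPartition n)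
    (h : StorableMP l m n) :
    IsPartition (diagMP l m n) ∧ StorableMP l (diagMP l m n) n := by
  obtain ⟨hml, hnm⟩ := h
  have hml' : ∀ i, l i ≤ m i ∧ m (i + 1) ≤ l i := hml
  have hnm' : ∀ i, m i ≤ n i ∧ n (i + 1) ≤ m i := hnm
  have hA : ∀ i, l i ≤ diagMP l m n i := by
    intro i
    cases i with
    | zero =>
      have h1 : l 0 ≤ m 0 ∧ m 1 ≤ l 0 := hml' 0
      have h2 : m 0 ≤ n 0 ∧ n 1 ≤ m 0 := hnm' 0
      simp only [diagMP]
      rcases le_total (l 0) (n 1) with h4 | h4 <;>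
        simp only [max_eq_left, max_eq_right, h4] <;> omega
    | succ j =>
      have h1 : l j ≤ m j ∧ m (j + 1) ≤ l j := hml' j
      have h2 : l (j + 1) ≤ m (j + 1) ∧ m (j + 2) ≤ l (j + 1) := hml' (j + 1)
      have h3 : m (j + 1) ≤ n (j + 1) ∧ n (j + 2) ≤ m (j + 1) := hnm' (j + 1)
      simp only [diagMP]
      rcases le_total (l j) (n (j + 1)) with h4 | h4 <;>
        rcases le_total (l (j + 1)) (n (j + 2)) with h5 | h5 <;>
        simp only [min_eq_left, min_eq_right, max_eq_left, max_eq_right, h4, h5] <;> omega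
  have hB : ∀ i, diagMP l m n (i + 1) ≤ l i := by
    intro i
    have h1 : l i ≤ m i ∧ m (i + 1) ≤ l i := hml' i
    have h2 : l (i + 1) ≤ m (i + 1) ∧ m (i + 2) ≤ l (i + 1) := hml' (i + 1)
    have h3 : m (i + 1) ≤ n (i + 1) ∧ n (i + 2) ≤ m (i + 1) := hnm' (i + 1)
    simp only [diagMP]
    rcases le_total (l i) (n (i + 1)) with h4 | h4 <;>
      rcases le_total (l (i + 1)) (n (i + 2)) with h5 | h5 <;>
      simp only [min_eq_left, min_eq_right, max_eq_left, max_eq_right, h4, h5] <;> omega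
  have hC : ∀ i, diagMP l m n i ≤ n i := by
    intro i
    cases i with
    | zero =>
      have h1 : l 0 ≤ m 0 ∧ m 1 ≤ l 0 := hml' 0
      have h2 : m 0 ≤ n 0 ∧ n 1 ≤ m 0 := hnm' 0
      simp only [diagMP]
      rcases le_total (l 0) (n 1) with h4 | h4 <;>
        simp only [max_eq_left, max_eq_right, h4] <;> omega
    | succ j =>
      have h1 : l (j + 1) ≤ m (j + 1) ∧ m (j + 2) ≤ l (j + 1) := hml' (j + 1)
      have h2 : m (j + 1) ≤ n (j + 1) ∧ n (j + 2) ≤ m (j + 1) := hnm' (j + 1)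
      simp only [diagMP]
      rcases le_total (l j) (n (j + 1)) with h4 | h4 <;>
        rcases le_total (l (j + 1)) (n (j + 2)) with h5 | h5 <;>
        simp only [min_eq_left, min_eq_right, max_eq_left, max_eq_right, h4, h5] <;> omega
  have hD : ∀ i, n (i + 1) ≤ diagMP l m n i := by
    intro i
    cases i with
    | zero =>
      have h1 : l 0 ≤ m 0 ∧ m 1 ≤ l 0 := hml' 0
      have h2 : m 0 ≤ n 0 ∧ n 1 ≤ m 0 := hnm' 0
      show n 1 ≤ diagMP l m n 0
      simp only [diagMP]
      rcases le_total (l 0) (n 1) with h4 | h4 <;>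
        simp only [max_eq_left, max_eq_right, h4] <;> omega
    | succ j =>
      have h1 : l j ≤ m j ∧ m (j + 1) ≤ l j := hml' j
      have h2 : l (j + 1) ≤ m (j + 1) ∧ m (j + 2) ≤ l (j + 1) := hml' (j + 1)
      have h3 : m (j + 1) ≤ n (j + 1) ∧ n (j + 2) ≤ m (j + 1) := hnm' (j + 1)
      show n (j + 2) ≤ diagMP l m n (j + 1)
      have h6 : m (j + 2) ≤ n (j + 2) ∧ n (j + 3) ≤ m (j + 2) := hnm' (j + 2)
      simp only [diagMP]
      rcases le_total (l j) (n (j + 1)) with h4 | h4 <;>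
        rcases le_total (l (j + 1)) (n (j + 2)) with h5 | h5 <;>
        simp only [min_eq_left, min_eq_right, max_eq_left, max_eq_right, h4, h5] <;> omega
  refine ⟨⟨fun i => le_trans (hB i) (hA i), ?_⟩, fun i => ⟨hA i, hB i⟩, fun i => ⟨hC i, hD i⟩⟩
  obtain ⟨Nl, hNl⟩ := hl.2
  obtain ⟨Nm, hNm⟩ := hm.2
  obtain ⟨Nn, hNn⟩ := hn.2
  refine ⟨Nl + Nm + Nn + 1, fun i hi => ?_⟩
  obtain ⟨j, rfl⟩ : ∃ j, i = j + 1 := ⟨i - 1, by omega⟩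
  have e1 : n (j + 1) = 0 := hNn _ (by omega)
  have e2 : n (j + 2) = 0 := hNn _ (by omega)
  have e3 : l (j + 1) = 0 := hNl _ (by omega)
  simp only [diagMP, e1, e2, e3, Nat.min_zero, Nat.max_self]
  omega
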